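/- arXiv:2205.10500 — 2 statements merged into one kernel-verified Lean document; each statement's English description precedes it below -/
import Mathlib

section
/- For any X ∈ ℝ^{n×p} with ‖X^T X - I_p‖_F ≤ 1/2, it holds that ‖A(X) - P(X)‖_F ≤ 4 ‖X^T X - I_p‖_F^3, where A(X) = (1/8) X (15 I_p - 10 X^T X + 3 (X^T X)^2) and P(X) is the polar factor of X. -/
open Matrix

/-- Frobenius norm of a real matrix. -/
noncomputable def frob {m n : ℕ} (X : Matrix (Fin m) (Fin n) ℝ) : ℝ :=
  Real.sqrt (∑ i, ∑ j, (X i j) ^ 2)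

/-- The constraint dissolving mapping `A(X) = (1/8) X (15 Iₚ - 10 XᵀX + 3 (XᵀX)²)`. -/
noncomputable def cdMap {n p : ℕ} (X : Matrix (Fin n) (Fin p) ℝ) : Matrix (Fin n) (Fin p) ℝ :=
  (1 / 8 : ℝ) • (X * ((15 : ℝ) • (1 : Matrix (Fin p) (Fin p) ℝ)
    - (10 : ℝ) • (Xᵀ * X) + (3 : ℝ) • (Xᵀ * X) ^ 2))

lemma frob_eq_trace {m n : ℕ} (X : Matrix (Fin m) (Fin n) ℝ) :
    ∑ i, ∑ j, (X i j) ^ 2 = trace (Xᵀ * X) := by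
  simp only [trace, Matrix.mul_apply, transpose_apply, diag_apply, sq]
  rw [Finset.sum_comm]

lemma frob_conj {n p : ℕ} (U : Matrix (Fin n) (Fin p) ℝ) (V M : Matrix (Fin p) (Fin p) ℝ)
    (hU : Uᵀ * U = 1) (hV : Vᵀ * V = 1) :
    frob (U * M * Vᵀ) = frob M := by
  unfold frob
  rw [frob_eq_trace, frob_eq_trace]
  have h : (U * M * Vᵀ)ᵀ * (U * M * Vᵀ) = V * (Mᵀ * M) * Vᵀ := by
    have h1 : (U * M * Vᵀ)ᵀ * (U * M * Vᵀ) = V * (Mᵀ * ((Uᵀ * U) * (M * Vᵀ))) := by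
      simp only [transpose_mul, transpose_transpose, Matrix.mul_assoc]
    rw [h1, hU, Matrix.one_mul]
    simp only [Matrix.mul_assoc]
  rw [h, trace_mul_cycle, ← Matrix.mul_assoc, hV, Matrix.one_mul]

lemma frob_diag {p : ℕ} (d : Fin p → ℝ) :
    frob (diagonal d) = Real.sqrt (∑ i, (d i) ^ 2) := by
  unfold frob
  congr 1
  apply Finset.sum_congr rfl
  intro i _
  rw [Finset.sum_eq_single i]
  · simp
  · intro j _ hj; rw [diagonal_apply_ne' _ hj]; ring
  · simp

lemma scalar_bound (s : ℝ) (hs : 0 ≤ s) :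
    ((1/8) * (3*s^5 - 10*s^3 + 15*s - 8)) ^ 2 ≤ 16 * (s^2 - 1) ^ 6 := by
  have key : 3*s^5 - 10*s^3 + 15*s - 8 = (s-1)^3 * (3*s^2 + 9*s + 8) := by ring
  have h1 : 3*s^2 + 9*s + 8 ≤ 32 * (s+1)^3 := by nlinarith [sq_nonneg s, pow_nonneg hs 3]
  have h2 : (0:ℝ) ≤ 3*s^2 + 9*s + 8 := by positivity
  have h3 : (3*s^2 + 9*s + 8)^2 ≤ (32 * (s+1)^3)^2 := by
    apply pow_le_pow_left₀ h2 h1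
  have h4 : (0:ℝ) ≤ ((s-1)^3)^2 := sq_nonneg _
  have h5 : ((s-1)^3)^2 * (3*s^2 + 9*s + 8)^2 ≤ ((s-1)^3)^2 * (32 * (s+1)^3)^2 :=
    mul_le_mul_of_nonneg_left h3 h4
  calc ((1/8) * (3*s^5 - 10*s^3 + 15*s - 8)) ^ 2
      = (1/64) * (((s-1)^3)^2 * (3*s^2 + 9*s + 8)^2) := by rw [key]; ring
    _ ≤ (1/64) * (((s-1)^3)^2 * (32 * (s+1)^3)^2) := by linarith
    _ = 16 * (s^2 - 1) ^ 6 := by ring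

/-- For `‖XᵀX - Iₚ‖_F ≤ 1/2` and any economical SVD `X = U Σ Vᵀ`, with polar factor
`P(X) = U Vᵀ`, one has `‖A(X) - P(X)‖_F ≤ 4 ‖XᵀX - Iₚ‖_F³`. -/
theorem stmt_12 {n p : ℕ} (X U : Matrix (Fin n) (Fin p) ℝ)
    (V : Matrix (Fin p) (Fin p) ℝ) (σ : Fin p → ℝ)
    (hU : Uᵀ * U = 1) (hV : Vᵀ * V = 1) (hV' : V * Vᵀ = 1)
    (hσ : ∀ i, 0 ≤ σ i)
    (hX : X = U * Matrix.diagonal σ * Vᵀ)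
    (hfeas : frob (Xᵀ * X - 1) ≤ 1 / 2) :
    frob (cdMap X - U * Vᵀ) ≤ 4 * (frob (Xᵀ * X - 1)) ^ 3 := by
  have hXtX : Xᵀ * X = V * diagonal (fun i => σ i ^ 2) * Vᵀ := by
    have h1 : Xᵀ * X = V * ((diagonal σ)ᵀ * ((Uᵀ * U) * (diagonal σ * Vᵀ))) := by
      rw [hX]; simp only [transpose_mul, transpose_transpose, Matrix.mul_assoc]
    rw [h1, hU, Matrix.one_mul, diagonal_transpose, ← Matrix.mul_assoc (diagonal σ),
      diagonal_mul_diagonal, ← Matrix.mul_assoc]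
    have : (fun i => σ i * σ i) = fun i => σ i ^ 2 := by funext i; ring
    rw [this]
  have hdiff : Xᵀ * X - 1 = V * diagonal (fun i => σ i ^ 2 - 1) * Vᵀ := by
    rw [hXtX]
    have h2 : (diagonal (fun i => σ i ^ 2 - 1) : Matrix (Fin p) (Fin p) ℝ)
        = diagonal (fun i => σ i ^ 2) - 1 := by
      rw [← diagonal_one, diagonal_sub]
    rw [h2, Matrix.mul_sub, Matrix.sub_mul, Matrix.mul_one, hV']
  have hcd : cdMap X - U * Vᵀ
      = U * diagonal (fun i => (1/8) * (3*(σ i)^5 - 10*(σ i)^3 + 15*(σ i) - 8)) * Vᵀ := by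
    have hsq : (Xᵀ * X) ^ 2 = V * diagonal (fun i => σ i ^ 4) * Vᵀ := by
      rw [sq, hXtX]
      have h1 : V * diagonal (fun i => σ i ^ 2) * Vᵀ * (V * diagonal (fun i => σ i ^ 2) * Vᵀ)
          = V * (diagonal (fun i => σ i ^ 2) * ((Vᵀ * V) * (diagonal (fun i => σ i ^ 2) * Vᵀ))) := by
        simp only [Matrix.mul_assoc]
      rw [h1, hV, Matrix.one_mul, ← Matrix.mul_assoc (diagonal _), diagonal_mul_diagonal,
        ← Matrix.mul_assoc]
      have : (fun i => σ i ^ 2 * σ i ^ 2) = fun i => σ i ^ 4 := by funext i; ring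
      rw [this]
    have hpoly : (15 : ℝ) • (1 : Matrix (Fin p) (Fin p) ℝ)
        - (10 : ℝ) • (Xᵀ * X) + (3 : ℝ) • (Xᵀ * X) ^ 2
        = V * diagonal (fun i => 15 - 10 * σ i ^ 2 + 3 * σ i ^ 4) * Vᵀ := by
      rw [hsq, hXtX]
      have e1 : (15 : ℝ) • (1 : Matrix (Fin p) (Fin p) ℝ)
          = V * ((15:ℝ) • (1 : Matrix (Fin p) (Fin p) ℝ)) * Vᵀ := by
        rw [mul_smul_comm, smul_mul_assoc, Matrix.mul_one, hV']
      have e2 : (10 : ℝ) • (V * diagonal (fun i => σ i ^ 2) * Vᵀ)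
          = V * ((10:ℝ) • diagonal (fun i => σ i ^ 2)) * Vᵀ := by
        rw [mul_smul_comm, smul_mul_assoc]
      have e3 : (3 : ℝ) • (V * diagonal (fun i => σ i ^ 4) * Vᵀ)
          = V * ((3:ℝ) • diagonal (fun i => σ i ^ 4)) * Vᵀ := by
        rw [mul_smul_comm, smul_mul_assoc]
      rw [e1, e2, e3, ← Matrix.sub_mul, ← Matrix.mul_sub, ← Matrix.add_mul, ← Matrix.mul_add]
      congr 2
      ext i j
      by_cases h : i = j <;> simp [h, diagonal, one_apply] <;> ring
    unfold cdMap
    rw [hpoly, hX]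
    have h1 : U * diagonal σ * Vᵀ * (V * diagonal (fun i => 15 - 10 * σ i ^ 2 + 3 * σ i ^ 4) * Vᵀ)
        = U * (diagonal σ * ((Vᵀ * V) * (diagonal (fun i => 15 - 10 * σ i ^ 2 + 3 * σ i ^ 4) * Vᵀ))) := by
      simp only [Matrix.mul_assoc]
    rw [h1, hV, Matrix.one_mul, ← Matrix.mul_assoc (diagonal σ), diagonal_mul_diagonal,
      ← Matrix.mul_assoc, ← Matrix.smul_mul, ← Matrix.mul_smul]
    have h2 : U * Vᵀ = U * (1 : Matrix (Fin p) (Fin p) ℝ) * Vᵀ := by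
      rw [Matrix.mul_one]
    rw [h2, ← Matrix.sub_mul, ← Matrix.mul_sub]
    congr 2
    ext i j
    by_cases h : i = j <;> simp [h, diagonal, one_apply] <;> ring
  rw [hcd, hdiff, frob_conj U V _ hU hV, frob_conj V V _ hV hV, frob_diag, frob_diag]
  rw [hdiff, frob_conj V V _ hV hV, frob_diag] at hfeas
  -- scalar part
  set S : ℝ := ∑ i, (σ i ^ 2 - 1) ^ 2 with hS
  have hS0 : 0 ≤ S := Finset.sum_nonneg fun i _ => sq_nonneg _
  have hS14 : S ≤ 1/4 := by
    have := Real.sqrt_le_sqrt (le_of_eq (show (1/2:ℝ)^2 = 1/4 by norm_num).symm)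
    nlinarith [Real.sq_sqrt hS0, Real.sqrt_nonneg S, hfeas]
  have hterm : ∀ i : Fin p, (σ i ^ 2 - 1) ^ 2 ≤ S :=
    fun i => Finset.single_le_sum (f := fun i => (σ i ^ 2 - 1) ^ 2)
      (fun j _ => sq_nonneg _) (Finset.mem_univ i)
  have hsum : ∑ i, ((1/8) * (3*(σ i)^5 - 10*(σ i)^3 + 15*(σ i) - 8)) ^ 2 ≤ 16 * S ^ 3 := by
    have hpt : ∀ i : Fin p, ((1/8) * (3*(σ i)^5 - 10*(σ i)^3 + 15*(σ i) - 8)) ^ 2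
        ≤ 16 * ((σ i ^ 2 - 1) ^ 2) * S ^ 2 := by
      intro i
      have h1 := scalar_bound (σ i) (hσ i)
      have h2' : ((σ i ^ 2 - 1) ^ 2) ^ 2 ≤ S ^ 2 :=
        pow_le_pow_left₀ (sq_nonneg _) (hterm i) 2
      have h2 : ((σ i ^ 2 - 1) ^ 2) ^ 3 ≤ ((σ i ^ 2 - 1) ^ 2) * S ^ 2 := by
        calc ((σ i ^ 2 - 1) ^ 2) ^ 3 = (σ i ^ 2 - 1) ^ 2 * ((σ i ^ 2 - 1) ^ 2) ^ 2 := by ring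
          _ ≤ (σ i ^ 2 - 1) ^ 2 * S ^ 2 := mul_le_mul_of_nonneg_left h2' (sq_nonneg _)
      calc ((1/8) * (3*(σ i)^5 - 10*(σ i)^3 + 15*(σ i) - 8)) ^ 2
          ≤ 16 * (σ i ^ 2 - 1) ^ 6 := h1
        _ = 16 * ((σ i ^ 2 - 1) ^ 2) ^ 3 := by ring
        _ ≤ 16 * (((σ i ^ 2 - 1) ^ 2) * S ^ 2) := by linarith
        _ = 16 * ((σ i ^ 2 - 1) ^ 2) * S ^ 2 := by ring
    calc ∑ i, ((1/8) * (3*(σ i)^5 - 10*(σ i)^3 + 15*(σ i) - 8)) ^ 2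
        ≤ ∑ i, 16 * ((σ i ^ 2 - 1) ^ 2) * S ^ 2 := Finset.sum_le_sum fun i _ => hpt i
      _ = 16 * S * S ^ 2 := by rw [← Finset.sum_mul, ← Finset.mul_sum]
      _ = 16 * S ^ 3 := by ring
  have hfin : Real.sqrt (∑ i, ((1/8) * (3*(σ i)^5 - 10*(σ i)^3 + 15*(σ i) - 8)) ^ 2)
      ≤ Real.sqrt (16 * S ^ 3) := Real.sqrt_le_sqrt hsum
  have heq : Real.sqrt (16 * S ^ 3) = 4 * Real.sqrt S ^ 3 := by
    rw [show 16 * S ^ 3 = (4 * Real.sqrt S ^ 3) ^ 2 by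
      rw [mul_pow, ← pow_mul, show 3*2 = 2*3 by ring, pow_mul, Real.sq_sqrt hS0]; norm_num]
    exact Real.sqrt_sq (by positivity)
  calc Real.sqrt (∑ i, ((1/8) * (3*(σ i)^5 - 10*(σ i)^3 + 15*(σ i) - 8)) ^ 2)
      ≤ Real.sqrt (16 * S ^ 3) := hfin
    _ = 4 * Real.sqrt S ^ 3 := heq
end

section
/- Let Y ∈ ℝ^{n×p} with ‖Y^T Y - I_p‖_F ≤ 1/6, D, with ‖D‖_F ≤ M_2, β > 0, 0 < η ≤ 1/(2β), and set Y_+ = Y - η(D + β Y(Y^T Y - I_p)). Then ‖Y_+^T Y_+ - I_p‖_F ≤ (1 - (5/6)ηβ) ‖Y^T Y - I_p‖_F + 3η M_2 + η^2 M_2^2. -/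
open Matrix

noncomputable def fsq {m n : ℕ} (X : Matrix (Fin m) (Fin n) ℝ) : ℝ := ∑ i, ∑ j, (X i j) ^ 2

noncomputable def ip {m n : ℕ} (A B : Matrix (Fin m) (Fin n) ℝ) : ℝ := ∑ i, ∑ j, A i j * B i j

lemma fsq_nonneg {m n : ℕ} (X : Matrix (Fin m) (Fin n) ℝ) : 0 ≤ fsq X :=
  Finset.sum_nonneg fun _ _ => Finset.sum_nonneg fun _ _ => sq_nonneg _

lemma frob_eq {m n : ℕ} (X : Matrix (Fin m) (Fin n) ℝ) : frob X = Real.sqrt (fsq X) := rfl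

lemma frob_nonneg {m n : ℕ} (X : Matrix (Fin m) (Fin n) ℝ) : 0 ≤ frob X := Real.sqrt_nonneg _

lemma frob_sq {m n : ℕ} (X : Matrix (Fin m) (Fin n) ℝ) : frob X ^ 2 = fsq X := by
  rw [frob_eq, Real.sq_sqrt (fsq_nonneg X)]

lemma ip_self {m n : ℕ} (X : Matrix (Fin m) (Fin n) ℝ) : ip X X = fsq X := by
  simp [ip, fsq, sq]

lemma ip_le {m n : ℕ} (A B : Matrix (Fin m) (Fin n) ℝ) : ip A B ≤ frob A * frob B := by
  have h : ip A B = ∑ x : Fin m × Fin n, A x.1 x.2 * B x.1 x.2 := by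
    rw [ip, ← Finset.sum_product']; rfl
  have hcs := Finset.sum_mul_sq_le_sq_mul_sq Finset.univ (fun x : Fin m × Fin n => A x.1 x.2)
    (fun x : Fin m × Fin n => B x.1 x.2)
  have h2 : fsq A = ∑ x : Fin m × Fin n, A x.1 x.2 ^ 2 := by
    rw [fsq, ← Finset.sum_product']; rfl
  have h3 : fsq B = ∑ x : Fin m × Fin n, B x.1 x.2 ^ 2 := by
    rw [fsq, ← Finset.sum_product']; rfl
  calc ip A B ≤ |ip A B| := le_abs_self _
    _ = Real.sqrt (ip A B ^ 2) := (Real.sqrt_sq_eq_abs _).symm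
    _ ≤ Real.sqrt (fsq A * fsq B) := by
        apply Real.sqrt_le_sqrt; rw [h, h2, h3]; exact hcs
    _ = frob A * frob B := by rw [frob_eq, frob_eq, Real.sqrt_mul (fsq_nonneg A)]

lemma fsq_transpose {m n : ℕ} (X : Matrix (Fin m) (Fin n) ℝ) : fsq Xᵀ = fsq X := by
  rw [fsq, fsq, Finset.sum_comm]; rfl

lemma frob_transpose {m n : ℕ} (X : Matrix (Fin m) (Fin n) ℝ) : frob Xᵀ = frob X := by
  rw [frob_eq, frob_eq, fsq_transpose]

lemma frob_smul {m n : ℕ} (c : ℝ) (X : Matrix (Fin m) (Fin n) ℝ) :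
    frob (c • X) = |c| * frob X := by
  rw [frob_eq, frob_eq, fsq]
  have : ∀ i j, ((c • X) i j) ^ 2 = c ^ 2 * (X i j) ^ 2 := by
    intro i j; simp [Matrix.smul_apply]; ring
  simp_rw [this, ← Finset.mul_sum]
  rw [Real.sqrt_mul (sq_nonneg c), Real.sqrt_sq_eq_abs]; rfl

lemma ip_add_right {m n : ℕ} (A B C : Matrix (Fin m) (Fin n) ℝ) :
    ip A (B + C) = ip A B + ip A C := by
  simp [ip, Matrix.add_apply, mul_add, Finset.sum_add_distrib]

lemma fsq_add {m n : ℕ} (A B : Matrix (Fin m) (Fin n) ℝ) :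
    fsq (A + B) = fsq A + 2 * ip A B + fsq B := by
  simp only [fsq, ip, Matrix.add_apply]
  have : ∀ i j, (A i j + B i j) ^ 2 = A i j ^ 2 + 2 * (A i j * B i j) + B i j ^ 2 := by
    intro i j; ring
  simp_rw [this, Finset.sum_add_distrib, ← Finset.mul_sum]

lemma frob_add_le {m n : ℕ} (A B : Matrix (Fin m) (Fin n) ℝ) :
    frob (A + B) ≤ frob A + frob B := by
  have h : fsq (A + B) ≤ (frob A + frob B) ^ 2 := by
    rw [fsq_add]
    have := ip_le A B
    have ha := frob_sq A; have hb := frob_sq B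
    nlinarith [frob_nonneg A, frob_nonneg B]
  calc frob (A + B) = Real.sqrt (fsq (A + B)) := rfl
    _ ≤ Real.sqrt ((frob A + frob B) ^ 2) := Real.sqrt_le_sqrt h
    _ = |frob A + frob B| := Real.sqrt_sq_eq_abs _
    _ = frob A + frob B := abs_of_nonneg (add_nonneg (frob_nonneg A) (frob_nonneg B))

lemma frob_mul_le {m n q : ℕ} (A : Matrix (Fin m) (Fin n) ℝ) (B : Matrix (Fin n) (Fin q) ℝ) :
    frob (A * B) ≤ frob A * frob B := by
  have h : fsq (A * B) ≤ fsq A * fsq B := by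
    have h1 : ∀ (i : Fin m) (k : Fin q), ((A * B) i k) ^ 2 ≤
        (∑ j, A i j ^ 2) * (∑ j, B j k ^ 2) := by
      intro i k
      have := Finset.sum_mul_sq_le_sq_mul_sq Finset.univ (fun j => A i j) (fun j => B j k)
      simpa [Matrix.mul_apply] using this
    calc fsq (A * B) ≤ ∑ i, ∑ k, (∑ j, A i j ^ 2) * (∑ j, B j k ^ 2) := by
          apply Finset.sum_le_sum; intro i _; exact Finset.sum_le_sum fun k _ => h1 i k
      _ = fsq A * fsq B := by
          rw [← fsq_transpose B, fsq, fsq, Finset.sum_mul_sum]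
          simp [Matrix.transpose_apply]
  calc frob (A * B) = Real.sqrt (fsq (A * B)) := rfl
    _ ≤ Real.sqrt (fsq A * fsq B) := Real.sqrt_le_sqrt h
    _ = frob A * frob B := by rw [Real.sqrt_mul (fsq_nonneg A), frob_eq, frob_eq]

lemma ip_eq_trace {m n : ℕ} (A B : Matrix (Fin m) (Fin n) ℝ) :
    ip A B = Matrix.trace (Aᵀ * B) := by
  simp only [ip, Matrix.trace, Matrix.diag_apply, Matrix.mul_apply, Matrix.transpose_apply]
  exact Finset.sum_comm

lemma ip_mul_left {m n q : ℕ} (M : Matrix (Fin m) (Fin n) ℝ) (A : Matrix (Fin n) (Fin q) ℝ)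
    (B : Matrix (Fin m) (Fin q) ℝ) : ip (M * A) B = ip A (Mᵀ * B) := by
  rw [ip_eq_trace, ip_eq_trace, Matrix.transpose_mul, Matrix.mul_assoc]

lemma ip_mul_right {m n q : ℕ} (A : Matrix (Fin m) (Fin n) ℝ) (M : Matrix (Fin n) (Fin q) ℝ)
    (B : Matrix (Fin m) (Fin q) ℝ) : ip (A * M) B = ip A (B * Mᵀ) := by
  rw [ip_eq_trace, ip_eq_trace, Matrix.transpose_mul, Matrix.mul_assoc,
    Matrix.trace_mul_comm, Matrix.mul_assoc]

lemma mulY_left {n p q : ℕ} (Y : Matrix (Fin n) (Fin p) ℝ)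
    (hfeas : frob (Yᵀ * Y - 1) ≤ 1 / 6) (A : Matrix (Fin p) (Fin q) ℝ) :
    frob (Y * A) ≤ 7 / 6 * frob A := by
  set G := Yᵀ * Y - 1 with hGdef
  have hYY : Yᵀ * Y = G + 1 := by rw [hGdef, sub_add_cancel]
  have h1 : fsq (Y * A) = ip A (G * A) + fsq A := by
    rw [← ip_self, ip_mul_left, ← Matrix.mul_assoc, hYY, Matrix.add_mul, Matrix.one_mul,
      ip_add_right, ip_self]
  have h2 : ip A (G * A) ≤ 1 / 6 * frob A ^ 2 := by
    calc ip A (G * A) ≤ frob A * frob (G * A) := ip_le _ _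
      _ ≤ frob A * (frob G * frob A) := by
          apply mul_le_mul_of_nonneg_left (frob_mul_le G A) (frob_nonneg A)
      _ ≤ 1 / 6 * frob A ^ 2 := by nlinarith [frob_nonneg A, frob_nonneg G]
  have h3 : frob (Y * A) ^ 2 ≤ (7 / 6 * frob A) ^ 2 := by
    rw [frob_sq, h1]
    nlinarith [frob_sq A, frob_nonneg A]
  nlinarith [frob_nonneg (Y * A), frob_nonneg A]

lemma mulY_right {n p q : ℕ} (Y : Matrix (Fin n) (Fin p) ℝ)
    (hfeas : frob (Yᵀ * Y - 1) ≤ 1 / 6) (A : Matrix (Fin q) (Fin n) ℝ) :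
    frob (A * Y) ≤ 7 / 6 * frob A := by
  have h1 : fsq (A * Y) = ip A ((A * Y) * Yᵀ) := by
    rw [← ip_self, ip_mul_right]
  have h2 : frob ((A * Y) * Yᵀ) ≤ 7 / 6 * frob (A * Y) := by
    have e : (A * Y) * Yᵀ = (Y * (A * Y)ᵀ)ᵀ := by
      rw [Matrix.transpose_mul, Matrix.transpose_transpose]
    rw [e, frob_transpose]
    have := mulY_left Y hfeas ((A * Y)ᵀ)
    rwa [frob_transpose] at this
  have h3 : fsq (A * Y) ≤ frob A * (7 / 6 * frob (A * Y)) :=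
    h1 ▸ le_trans (ip_le _ _) (mul_le_mul_of_nonneg_left h2 (frob_nonneg A))
  rw [← frob_sq] at h3
  nlinarith [frob_nonneg (A * Y), frob_nonneg A]

lemma arith_16 (η β g M₂ : ℝ) (hη : 0 < η) (hβ : 0 < β) (hg0 : 0 ≤ g) (hg : g ≤ 1/6)
    (hM0 : 0 ≤ M₂) (h2ηβ : 2*η*β ≤ 1) :
    ((1 - 2*η*β) * g + (2*η*β) * (g*g)) + (η * (2*(7/6*M₂)) + η^2*(M₂ + β*(7/6*g))^2)
      ≤ (1 - (5/6)*η*β) * g + 3*η*M₂ + η^2*M₂^2 := by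
  have hbg : 0 ≤ η*β*g := by positivity
  have e1 : η * β * g ≤ 1 / 12 := by nlinarith
  have e2 : η ^ 2 * β ^ 2 * g ^ 2 ≤ 1 / 12 * (η * β * g) := by nlinarith
  have e3 : η ^ 2 * β * M₂ * g ≤ 1 / 12 * (η * M₂) := by
    nlinarith [mul_nonneg hη.le hM0]
  have e4 : η * β * (g * g) ≤ 1 / 6 * (η * β * g) := by nlinarith
  nlinarith [mul_nonneg hη.le hM0, hbg]

theorem stmt_16 {n p : ℕ} (Y D : Matrix (Fin n) (Fin p) ℝ) (β η M₂ : ℝ)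
    (hfeas : frob (Yᵀ * Y - 1) ≤ 1 / 6)
    (hD : frob D ≤ M₂) (hβ : 0 < β) (hη : 0 < η) (hη' : η ≤ 1 / (2 * β)) :
    frob ((Y - η • (D + β • (Y * (Yᵀ * Y - 1))))ᵀ *
        (Y - η • (D + β • (Y * (Yᵀ * Y - 1)))) - 1) ≤
      (1 - (5 / 6) * η * β) * frob (Yᵀ * Y - 1) + 3 * η * M₂ + η ^ 2 * M₂ ^ 2 := by
  set G := Yᵀ * Y - 1 with hGdef
  set W := D + β • (Y * G) with hWdef
  have hfeas' : frob (Yᵀ * Y - 1) ≤ 1 / 6 := by rw [← hGdef]; exact hfeas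
  have hYY : Yᵀ * Y = G + 1 := by rw [hGdef, sub_add_cancel]
  have hGt : Gᵀ = G := by
    rw [hGdef]; simp [Matrix.transpose_sub, Matrix.transpose_mul]
  have h2ηβ : 2 * η * β ≤ 1 := by
    rw [le_div_iff₀ (by positivity)] at hη'
    linarith
  have h1 : Yᵀ * W = Yᵀ * D + β • (G * G + G) := by
    rw [hWdef, Matrix.mul_add, Matrix.mul_smul, ← Matrix.mul_assoc, hYY, Matrix.add_mul,
      Matrix.one_mul]
  have h2 : Wᵀ * Y = Dᵀ * Y + β • (G * G + G) := by
    rw [hWdef, Matrix.transpose_add, Matrix.transpose_smul, Matrix.transpose_mul, hGt,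
      Matrix.add_mul, Matrix.smul_mul, Matrix.mul_assoc, hYY, Matrix.mul_add, Matrix.mul_one]
  have key : (Y - η • W)ᵀ * (Y - η • W) - 1 =
      ((1 - 2 * η * β) • G + (-(2 * η * β)) • (G * G)) +
        ((-η) • (Dᵀ * Y + Yᵀ * D) + (η ^ 2) • (Wᵀ * W)) := by
    simp only [Matrix.transpose_sub, Matrix.transpose_smul, Matrix.sub_mul, Matrix.mul_sub,
      Matrix.smul_mul, Matrix.mul_smul, hYY, h1, h2, smul_smul]
    module
  set g := frob G with hgdef
  have hg0 : 0 ≤ g := frob_nonneg G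
  have hg : g ≤ 1 / 6 := hfeas
  have hM0 : 0 ≤ M₂ := le_trans (frob_nonneg D) hD
  have hYG : frob (Y * G) ≤ 7 / 6 * g := mulY_left Y hfeas' G
  have hGG : frob (G * G) ≤ g * g := frob_mul_le G G
  have hW : frob W ≤ M₂ + β * (7 / 6 * g) := by
    rw [hWdef]
    calc frob (D + β • (Y * G)) ≤ frob D + frob (β • (Y * G)) := frob_add_le _ _
      _ = frob D + |β| * frob (Y * G) := by rw [frob_smul]
      _ ≤ M₂ + β * (7 / 6 * g) := by
          rw [abs_of_pos hβ]
          exact add_le_add hD (mul_le_mul_of_nonneg_left hYG hβ.le)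
  have hWW : frob (Wᵀ * W) ≤ (M₂ + β * (7 / 6 * g)) ^ 2 := by
    calc frob (Wᵀ * W) ≤ frob Wᵀ * frob W := frob_mul_le _ _
      _ = frob W * frob W := by rw [frob_transpose]
      _ ≤ (M₂ + β * (7 / 6 * g)) ^ 2 := by nlinarith [frob_nonneg W]
  have hDY : frob (Dᵀ * Y + Yᵀ * D) ≤ 2 * (7 / 6 * M₂) := by
    have e1 : frob (Yᵀ * D) = frob (Dᵀ * Y) := by
      rw [← frob_transpose (Dᵀ * Y), Matrix.transpose_mul, Matrix.transpose_transpose]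
    have e2 : frob (Dᵀ * Y) ≤ 7 / 6 * M₂ := by
      have := mulY_right Y hfeas' Dᵀ
      rw [frob_transpose] at this
      nlinarith
    calc frob (Dᵀ * Y + Yᵀ * D) ≤ frob (Dᵀ * Y) + frob (Yᵀ * D) := frob_add_le _ _
      _ ≤ 2 * (7 / 6 * M₂) := by rw [e1]; linarith
  have b1 : frob ((1 - 2 * η * β) • G) = (1 - 2 * η * β) * g := by
    rw [frob_smul, abs_of_nonneg (by linarith)]
  have b2 : frob ((-(2 * η * β)) • (G * G)) ≤ (2 * η * β) * (g * g) := by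
    rw [frob_smul, abs_neg, abs_of_nonneg (by positivity)]
    exact mul_le_mul_of_nonneg_left hGG (by positivity)
  have b3 : frob ((-η) • (Dᵀ * Y + Yᵀ * D)) ≤ η * (2 * (7 / 6 * M₂)) := by
    rw [frob_smul, abs_neg, abs_of_pos hη]
    exact mul_le_mul_of_nonneg_left hDY hη.le
  have b4 : frob ((η ^ 2) • (Wᵀ * W)) ≤ η ^ 2 * (M₂ + β * (7 / 6 * g)) ^ 2 := by
    rw [frob_smul, abs_of_nonneg (sq_nonneg η)]
    exact mul_le_mul_of_nonneg_left hWW (sq_nonneg η)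
  calc frob ((Y - η • W)ᵀ * (Y - η • W) - 1)
      = frob (((1 - 2 * η * β) • G + (-(2 * η * β)) • (G * G)) +
        ((-η) • (Dᵀ * Y + Yᵀ * D) + (η ^ 2) • (Wᵀ * W))) := by rw [key]
    _ ≤ frob ((1 - 2 * η * β) • G + (-(2 * η * β)) • (G * G)) +
        frob ((-η) • (Dᵀ * Y + Yᵀ * D) + (η ^ 2) • (Wᵀ * W)) := frob_add_le _ _
    _ ≤ (frob ((1 - 2 * η * β) • G) + frob ((-(2 * η * β)) • (G * G))) +
        (frob ((-η) • (Dᵀ * Y + Yᵀ * D)) + frob ((η ^ 2) • (Wᵀ * W))) :=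
        add_le_add (frob_add_le _ _) (frob_add_le _ _)
    _ ≤ ((1 - 2 * η * β) * g + (2 * η * β) * (g * g)) +
        (η * (2 * (7 / 6 * M₂)) + η ^ 2 * (M₂ + β * (7 / 6 * g)) ^ 2) := by
        rw [b1]; exact add_le_add (add_le_add le_rfl b2) (add_le_add b3 b4)
    _ ≤ (1 - (5 / 6) * η * β) * g + 3 * η * M₂ + η ^ 2 * M₂ ^ 2 := by
        have := arith_16 η β g M₂ hη hβ hg0 hg hM0 h2ηβ
        linarith
end
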